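/- Let α > 0, K > 0, x₀ ∈ ℝ, and let Θ₀ : [x₀,∞) → ℝ be continuous with |Θ₀(y)| ≤ K e^{−α y} for all y ≥ x₀. Let μ ∈ ℂ with 0 ≤ Re μ and 2 Re μ < α. Then for every x ≥ x₀ all integrals below converge absolutely and ∫_x^∞ ( e^{−2μ(x−y)} − e^{2μ(x−y)} ) Θ₀(y) dy = 2μ ∫_x^∞ ( e^{−2μ(x−y)} + e^{2μ(x−y)} ) ( ∫_y^∞ Θ₀(τ) dτ ) dy; moreover |∫_x^∞ ( e^{−2μ(x−y)} + e^{2μ(x−y)} ) ( ∫_y^∞ Θ₀(τ) dτ ) dy| ≤ C e^{−α x} for all x ≥ max(x₀, 0), where C depends only on K, α and Re μ. -/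

import Mathlib

open MeasureTheory

open Set Filter Topology

lemma myint_exp (b : ℝ) (hb : 0 < b) (a : ℝ) :
    ∫ τ in Set.Ioi a, Real.exp (-b * τ) = Real.exp (-b * a) / b := by
  have hderiv : ∀ τ ∈ Set.Ici a,
      HasDerivAt (fun t => -(Real.exp (-b * t) / b)) (Real.exp (-b * τ)) τ := by
    intro τ _
    have h1 : HasDerivAt (fun t : ℝ => -b * t) (-b) τ := by
      simpa using (hasDerivAt_id τ).const_mul (-b)
    have h2 := ((h1.exp).div_const b).neg
    refine h2.congr_deriv ?_
    field_simp
  have htend : Tendsto (fun t => -(Real.exp (-b * t) / b)) atTop (𝓝 0) := by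
    have h3 : Tendsto (fun t : ℝ => Real.exp (-(b * t))) atTop (𝓝 0) :=
      Real.tendsto_exp_neg_atTop_nhds_zero.comp (Filter.Tendsto.const_mul_atTop hb tendsto_id)
    have : Tendsto (fun t : ℝ => Real.exp (-b * t)) atTop (𝓝 0) := by
      simpa [neg_mul] using h3
    simpa using (this.div_const b).neg
  have := integral_Ioi_of_hasDerivAt_of_tendsto' hderiv
    (exp_neg_integrableOn_Ioi a hb) htend
  rw [this]; ring


/-- Integration-by-parts identity producing the factor `2μ` (i.e. `√λ`) in the
difference `κ₁⁺ − θ₁⁺`: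
`∫_x^∞ (e^{−2μ(x−y)} − e^{2μ(x−y)}) Θ₀(y) dy
  = 2μ ∫_x^∞ (e^{−2μ(x−y)} + e^{2μ(x−y)}) (∫_y^∞ Θ₀) dy`,
with the last integral `O(e^{-α x})` for `x ≥ max(x₀, 0)`. -/
theorem integration_by_parts_sqrt_factor
    (α K x₀ : ℝ) (hα : 0 < α) (hK : 0 < K)
    (Θ₀ : ℝ → ℝ) (hΘcont : ContinuousOn Θ₀ (Set.Ici x₀))
    (hΘbd : ∀ y ≥ x₀, |Θ₀ y| ≤ K * Real.exp (-α * y))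
    (μ : ℂ) (hμre : 0 ≤ μ.re) (hμre' : 2 * μ.re < α) :
    ∃ C > 0,
      (∀ x ≥ x₀,
        (∀ y ≥ x₀, IntegrableOn (fun τ : ℝ => (Θ₀ τ : ℂ)) (Set.Ici y)) ∧
        IntegrableOn
          (fun y : ℝ =>
            (Complex.exp (-2*μ*((x:ℂ) - (y:ℂ))) - Complex.exp (2*μ*((x:ℂ) - (y:ℂ)))) *
              (Θ₀ y : ℂ))
          (Set.Ici x) ∧
        IntegrableOn
          (fun y : ℝ =>
            (Complex.exp (-2*μ*((x:ℂ) - (y:ℂ))) + Complex.exp (2*μ*((x:ℂ) - (y:ℂ)))) *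
              (∫ τ in Set.Ici y, (Θ₀ τ : ℂ)))
          (Set.Ici x) ∧
        (∫ y in Set.Ici x,
            (Complex.exp (-2*μ*((x:ℂ) - (y:ℂ))) - Complex.exp (2*μ*((x:ℂ) - (y:ℂ)))) *
              (Θ₀ y : ℂ)) =
          2*μ * ∫ y in Set.Ici x,
            (Complex.exp (-2*μ*((x:ℂ) - (y:ℂ))) + Complex.exp (2*μ*((x:ℂ) - (y:ℂ)))) *
              (∫ τ in Set.Ici y, (Θ₀ τ : ℂ))) ∧
      (∀ x ≥ max x₀ 0,
        ‖∫ y in Set.Ici x,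
            (Complex.exp (-2*μ*((x:ℂ) - (y:ℂ))) + Complex.exp (2*μ*((x:ℂ) - (y:ℂ)))) *
              (∫ τ in Set.Ici y, (Θ₀ τ : ℂ))‖ ≤ C * Real.exp (-α * x)) := by
  
  set r : ℝ := μ.re with hr
  have hβ : 0 < α - 2*r := by linarith
  -- continuity of the complexified Θ₀
  have hΘcC : ContinuousOn (fun τ : ℝ => (Θ₀ τ : ℂ)) (Set.Ici x₀) :=
    Complex.continuous_ofReal.comp_continuousOn hΘcont
  -- integrability of Θ₀ on tails
  have hΘI : ∀ y, x₀ ≤ y → IntegrableOn (fun τ : ℝ => (Θ₀ τ : ℂ)) (Set.Ici y) := by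
    intro y hy
    rw [integrableOn_Ici_iff_integrableOn_Ioi]
    have hsub : Set.Ioi y ⊆ Set.Ici x₀ := fun t ht => le_trans hy (le_of_lt ht)
    refine Integrable.mono' ((exp_neg_integrableOn_Ioi y hα).const_mul K)
      ((hΘcC.mono hsub).aestronglyMeasurable measurableSet_Ioi) ?_
    refine (ae_restrict_iff' measurableSet_Ioi).2 (Filter.Eventually.of_forall fun τ hτ => ?_)
    simpa [Complex.norm_real, Real.norm_eq_abs] using hΘbd τ (hsub hτ)
  -- bound for the tail integral F
  have hFbd : ∀ y, x₀ ≤ y →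
      ‖∫ τ in Set.Ici y, (Θ₀ τ : ℂ)‖ ≤ K/α * Real.exp (-α*y) := by
    intro y hy
    have hsub : Set.Ici y ⊆ Set.Ici x₀ := Set.Ici_subset_Ici.2 hy
    have h1 : ‖∫ τ in Set.Ici y, (Θ₀ τ : ℂ)‖ ≤ ∫ τ in Set.Ici y, K * Real.exp (-α*τ) := by
      refine norm_integral_le_of_norm_le
        ((integrableOn_Ici_iff_integrableOn_Ioi).2 ((exp_neg_integrableOn_Ioi y hα).const_mul K)) ?_
      · refine (ae_restrict_iff' measurableSet_Ici).2 (Filter.Eventually.of_forall fun τ hτ => ?_)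
        simpa [Complex.norm_real, Real.norm_eq_abs] using hΘbd τ (hsub hτ)
    have h2 : ∫ τ in Set.Ici y, K * Real.exp (-α*τ) = K/α * Real.exp (-α*y) := by
      rw [MeasureTheory.integral_Ici_eq_integral_Ioi, MeasureTheory.integral_const_mul,
        myint_exp α hα y]
      ring
    rw [h2] at h1; exact h1
  -- splitting of the tail integral
  have hsplit : ∀ z, x₀ ≤ z →
      (∫ τ in Set.Ici z, (Θ₀ τ : ℂ)) =
        (∫ τ in Set.Ici x₀, (Θ₀ τ : ℂ)) - ∫ τ in x₀..z, (Θ₀ τ : ℂ) := by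
    intro z hz
    have h1 : IntegrableOn (fun τ : ℝ => (Θ₀ τ : ℂ)) (Set.Ioc x₀ z) :=
      (hΘI x₀ le_rfl).mono_set (Set.Ioc_subset_Icc_self.trans Set.Icc_subset_Ici_self)
    have h2 : IntegrableOn (fun τ : ℝ => (Θ₀ τ : ℂ)) (Set.Ioi z) :=
      (hΘI z hz).mono_set Set.Ioi_subset_Ici_self
    rw [intervalIntegral.integral_of_le hz, MeasureTheory.integral_Ici_eq_integral_Ioi,
      MeasureTheory.integral_Ici_eq_integral_Ioi (x := x₀), ← Set.Ioc_union_Ioi_eq_Ioi hz,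
      setIntegral_union (Set.Ioc_disjoint_Ioi le_rfl) measurableSet_Ioi h1 h2]
    ring
  -- continuity of F on [x₀, ∞)
  have hFcont : ContinuousOn (fun z => ∫ τ in Set.Ici z, (Θ₀ τ : ℂ)) (Set.Ici x₀) := by
    intro z hz
    have hii : IntervalIntegrable (fun τ : ℝ => (Θ₀ τ : ℂ)) volume
        (min x₀ x₀) (max x₀ (z+1)) := by
      rw [min_self]
      rw [intervalIntegrable_iff_integrableOn_Ioc_of_le (le_max_left _ _)]
      exact (hΘI x₀ le_rfl).mono_set (Set.Ioc_subset_Icc_self.trans Set.Icc_subset_Ici_self)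
    have hprim : ContinuousWithinAt (fun b => ∫ τ in x₀..b, (Θ₀ τ : ℂ))
        (Set.Icc x₀ (z+1)) z :=
      intervalIntegral.continuousWithinAt_primitive (measure_singleton z) hii
    have hmem : Set.Icc x₀ (z+1) ∈ 𝓝[Set.Ici x₀] z := by
      rw [← Set.Ici_inter_Iic]
      exact Filter.inter_mem self_mem_nhdsWithin
        (mem_nhdsWithin_of_mem_nhds (Iic_mem_nhds (by linarith [hz.out])))
    have hg : ContinuousWithinAt
        (fun b => (∫ τ in Set.Ici x₀, (Θ₀ τ : ℂ)) - ∫ τ in x₀..b, (Θ₀ τ : ℂ))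
        (Set.Ici x₀) z :=
      (continuousWithinAt_const.sub (hprim.mono_of_mem_nhdsWithin hmem))
    exact hg.congr (fun b hb => hsplit b hb) (hsplit z hz)
  -- derivative of F on (x₀, ∞)
  have hFderiv : ∀ y, x₀ < y →
      HasDerivAt (fun z => ∫ τ in Set.Ici z, (Θ₀ τ : ℂ)) (-(Θ₀ y : ℂ)) y := by
    intro y hy
    have hct : ContinuousAt (fun τ : ℝ => (Θ₀ τ : ℂ)) y :=
      hΘcC.continuousAt (Ici_mem_nhds hy)
    have hii : IntervalIntegrable (fun τ : ℝ => (Θ₀ τ : ℂ)) volume x₀ y := by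
      rw [intervalIntegrable_iff_integrableOn_Ioc_of_le hy.le]
      exact (hΘI x₀ le_rfl).mono_set (Set.Ioc_subset_Icc_self.trans Set.Icc_subset_Ici_self)
    have hmeas : StronglyMeasurableAtFilter (fun τ : ℝ => (Θ₀ τ : ℂ)) (𝓝 y) volume :=
      ⟨Set.Ioi x₀, Ioi_mem_nhds hy,
        (hΘcC.mono Set.Ioi_subset_Ici_self).aestronglyMeasurable measurableSet_Ioi⟩
    have hprim : HasDerivAt (fun b => ∫ τ in x₀..b, (Θ₀ τ : ℂ)) ((Θ₀ y : ℂ)) y :=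
      intervalIntegral.integral_hasDerivAt_right hii hmeas hct
    have hg : HasDerivAt
        (fun b => (∫ τ in Set.Ici x₀, (Θ₀ τ : ℂ)) - ∫ τ in x₀..b, (Θ₀ τ : ℂ))
        (-(Θ₀ y : ℂ)) y := hprim.const_sub _
    refine hg.congr_of_eventuallyEq ?_
    filter_upwards [Ioi_mem_nhds hy] with b hb
    exact hsplit b (le_of_lt hb)
  -- norms of the exponentials
  have hnormA : ∀ x y : ℝ, ‖Complex.exp (-2*μ*((x:ℂ) - (y:ℂ)))‖ = Real.exp (2*r*(y-x)) := by
    intro x y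
    rw [Complex.norm_exp]
    congr 1
    have h : ((x:ℂ) - (y:ℂ)) = (((x - y : ℝ)) : ℂ) := by push_cast; ring
    rw [h]
    simp [Complex.mul_re, hr]
    ring
  have hnormB : ∀ x y : ℝ, ‖Complex.exp (2*μ*((x:ℂ) - (y:ℂ)))‖ = Real.exp (-(2*r*(y-x))) := by
    intro x y
    rw [Complex.norm_exp]
    congr 1
    have h : ((x:ℂ) - (y:ℂ)) = (((x - y : ℝ)) : ℂ) := by push_cast; ring
    rw [h]
    simp [Complex.mul_re, hr]
    ring
  -- exponent algebra
  have hexpalg : ∀ x y : ℝ, Real.exp (2*r*(y-x)) * Real.exp (-α*y)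
      = Real.exp (-(2*r)*x) * Real.exp (-(α-2*r)*y) := by
    intro x y
    rw [← Real.exp_add, ← Real.exp_add]
    congr 1; ring
  -- derivative of the exponentials
  have hAder : ∀ x y : ℝ, HasDerivAt (fun y : ℝ => Complex.exp (-2*μ*((x:ℂ) - (y:ℂ))))
      (2*μ * Complex.exp (-2*μ*((x:ℂ) - (y:ℂ)))) y := by
    intro x y
    have h0 : HasDerivAt (fun y : ℝ => ((y : ℝ) : ℂ)) 1 y := by
      simpa using (hasDerivAt_id y).ofReal_comp
    have h1 : HasDerivAt (fun y : ℝ => -2*μ*((x:ℂ) - (y:ℂ))) (2*μ) y := by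
      have := (h0.const_sub (x:ℂ)).const_mul (-2*μ)
      refine this.congr_deriv ?_
      ring
    simpa [mul_comm] using h1.cexp
  have hBder : ∀ x y : ℝ, HasDerivAt (fun y : ℝ => Complex.exp (2*μ*((x:ℂ) - (y:ℂ))))
      (-(2*μ) * Complex.exp (2*μ*((x:ℂ) - (y:ℂ)))) y := by
    intro x y
    have h0 : HasDerivAt (fun y : ℝ => ((y : ℝ) : ℂ)) 1 y := by
      simpa using (hasDerivAt_id y).ofReal_comp
    have h1 : HasDerivAt (fun y : ℝ => 2*μ*((x:ℂ) - (y:ℂ))) (-(2*μ)) y := by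
      have := (h0.const_sub (x:ℂ)).const_mul (2*μ)
      refine this.congr_deriv ?_
      ring
    simpa [mul_comm] using h1.cexp
  -- the master statement, for every x ≥ x₀
  have master : ∀ x, x₀ ≤ x →
      IntegrableOn
        (fun y : ℝ =>
          (Complex.exp (-2*μ*((x:ℂ) - (y:ℂ))) - Complex.exp (2*μ*((x:ℂ) - (y:ℂ)))) *
            (Θ₀ y : ℂ)) (Set.Ici x) ∧
      IntegrableOn
        (fun y : ℝ =>
          (Complex.exp (-2*μ*((x:ℂ) - (y:ℂ))) + Complex.exp (2*μ*((x:ℂ) - (y:ℂ)))) *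
            (∫ τ in Set.Ici y, (Θ₀ τ : ℂ))) (Set.Ici x) ∧
      ((∫ y in Set.Ici x,
          (Complex.exp (-2*μ*((x:ℂ) - (y:ℂ))) - Complex.exp (2*μ*((x:ℂ) - (y:ℂ)))) *
            (Θ₀ y : ℂ)) =
        2*μ * ∫ y in Set.Ici x,
          (Complex.exp (-2*μ*((x:ℂ) - (y:ℂ))) + Complex.exp (2*μ*((x:ℂ) - (y:ℂ)))) *
            (∫ τ in Set.Ici y, (Θ₀ τ : ℂ))) ∧
      ‖∫ y in Set.Ici x,
          (Complex.exp (-2*μ*((x:ℂ) - (y:ℂ))) + Complex.exp (2*μ*((x:ℂ) - (y:ℂ)))) *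
            (∫ τ in Set.Ici y, (Θ₀ τ : ℂ))‖ ≤
        2*K/(α*(α-2*r)) * Real.exp (-α * x) := by
    intro x hx
    have hsubI : Set.Ioi x ⊆ Set.Ici x₀ := fun t ht => le_trans hx (le_of_lt ht)
    have hsubIc : Set.Ici x ⊆ Set.Ici x₀ := Set.Ici_subset_Ici.2 hx
    -- continuity of exponential factors
    have hcA : Continuous (fun y : ℝ => Complex.exp (-2*μ*((x:ℂ) - (y:ℂ)))) := by
      fun_prop
    have hcB : Continuous (fun y : ℝ => Complex.exp (2*μ*((x:ℂ) - (y:ℂ)))) := by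
      fun_prop
    -- norm bound for sums/differences of exponentials
    have hABn : ∀ y : ℝ, x ≤ y →
        ‖Complex.exp (-2*μ*((x:ℂ) - (y:ℂ)))‖ + ‖Complex.exp (2*μ*((x:ℂ) - (y:ℂ)))‖
          ≤ 2 * Real.exp (2*r*(y-x)) := by
      intro y hy
      rw [hnormA, hnormB]
      have h1 : Real.exp (-(2*r*(y-x))) ≤ Real.exp (2*r*(y-x)) := by
        apply Real.exp_le_exp.2
        nlinarith [mul_nonneg hμre (sub_nonneg.2 hy)]
      linarith
    -- integrability of the two integrands on (x, ∞)
    have hi1 : IntegrableOn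
        (fun y : ℝ =>
          (Complex.exp (-2*μ*((x:ℂ) - (y:ℂ))) - Complex.exp (2*μ*((x:ℂ) - (y:ℂ)))) *
            (Θ₀ y : ℂ)) (Set.Ioi x) := by
      refine Integrable.mono'
        (((exp_neg_integrableOn_Ioi x hβ).const_mul (2*K*Real.exp (-(2*r)*x))))
        (((hcA.sub hcB).continuousOn.mul (hΘcC.mono hsubI)).aestronglyMeasurable
          measurableSet_Ioi) ?_
      refine (ae_restrict_iff' measurableSet_Ioi).2 (Filter.Eventually.of_forall fun y hy => ?_)
      have hy' : x ≤ y := le_of_lt hy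
      have h1 : ‖Complex.exp (-2*μ*((x:ℂ) - (y:ℂ))) - Complex.exp (2*μ*((x:ℂ) - (y:ℂ)))‖
          ≤ 2 * Real.exp (2*r*(y-x)) := (norm_sub_le _ _).trans (hABn y hy')
      have h2 : ‖(Θ₀ y : ℂ)‖ ≤ K * Real.exp (-α*y) := by
        simpa [Complex.norm_real, Real.norm_eq_abs] using hΘbd y (hsubI hy)
      calc ‖_ * (Θ₀ y : ℂ)‖ = ‖Complex.exp (-2*μ*((x:ℂ) - (y:ℂ)))
            - Complex.exp (2*μ*((x:ℂ) - (y:ℂ)))‖ * ‖(Θ₀ y : ℂ)‖ := norm_mul _ _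
        _ ≤ (2 * Real.exp (2*r*(y-x))) * (K * Real.exp (-α*y)) := by
            apply mul_le_mul h1 h2 (norm_nonneg _)
            positivity
        _ = 2*K*Real.exp (-(2*r)*x) * Real.exp (-(α-2*r)*y) := by
            linear_combination (2*K) * hexpalg x y
    have hi2 : IntegrableOn
        (fun y : ℝ =>
          (Complex.exp (-2*μ*((x:ℂ) - (y:ℂ))) + Complex.exp (2*μ*((x:ℂ) - (y:ℂ)))) *
            (∫ τ in Set.Ici y, (Θ₀ τ : ℂ))) (Set.Ioi x) := by
      refine Integrable.mono'
        (((exp_neg_integrableOn_Ioi x hβ).const_mul (2*(K/α)*Real.exp (-(2*r)*x))))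
        (((hcA.add hcB).continuousOn.mul (hFcont.mono hsubI)).aestronglyMeasurable
          measurableSet_Ioi) ?_
      refine (ae_restrict_iff' measurableSet_Ioi).2 (Filter.Eventually.of_forall fun y hy => ?_)
      have hy' : x ≤ y := le_of_lt hy
      have h1 : ‖Complex.exp (-2*μ*((x:ℂ) - (y:ℂ))) + Complex.exp (2*μ*((x:ℂ) - (y:ℂ)))‖
          ≤ 2 * Real.exp (2*r*(y-x)) := (norm_add_le _ _).trans (hABn y hy')
      have h2 := hFbd y (hsubI hy)
      calc ‖_ * _‖ = ‖Complex.exp (-2*μ*((x:ℂ) - (y:ℂ)))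
            + Complex.exp (2*μ*((x:ℂ) - (y:ℂ)))‖ * ‖∫ τ in Set.Ici y, (Θ₀ τ : ℂ)‖ :=
              norm_mul _ _
        _ ≤ (2 * Real.exp (2*r*(y-x))) * (K/α * Real.exp (-α*y)) := by
            apply mul_le_mul h1 h2 (norm_nonneg _)
            positivity
        _ = 2*(K/α)*Real.exp (-(2*r)*x) * Real.exp (-(α-2*r)*y) := by
            linear_combination (2*(K/α)) * hexpalg x y
    -- the FTC argument
    have hHcont : ContinuousWithinAt
        (fun y : ℝ =>
          (Complex.exp (-2*μ*((x:ℂ) - (y:ℂ))) - Complex.exp (2*μ*((x:ℂ) - (y:ℂ)))) *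
            (∫ τ in Set.Ici y, (Θ₀ τ : ℂ))) (Set.Ici x) x :=
      (((hcA.sub hcB).continuousOn.mul (hFcont.mono hsubIc)).continuousWithinAt
        Set.self_mem_Ici)
    have hHderiv : ∀ y ∈ Set.Ioi x, HasDerivAt
        (fun y : ℝ =>
          (Complex.exp (-2*μ*((x:ℂ) - (y:ℂ))) - Complex.exp (2*μ*((x:ℂ) - (y:ℂ)))) *
            (∫ τ in Set.Ici y, (Θ₀ τ : ℂ)))
        (2*μ*((Complex.exp (-2*μ*((x:ℂ) - (y:ℂ))) + Complex.exp (2*μ*((x:ℂ) - (y:ℂ)))) *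
            (∫ τ in Set.Ici y, (Θ₀ τ : ℂ))) -
          (Complex.exp (-2*μ*((x:ℂ) - (y:ℂ))) - Complex.exp (2*μ*((x:ℂ) - (y:ℂ)))) *
            (Θ₀ y : ℂ)) y := by
      intro y hy
      have := ((hAder x y).sub (hBder x y)).mul (hFderiv y (lt_of_le_of_lt hx hy))
      refine this.congr_deriv ?_
      simp only [Pi.sub_apply]
      ring
    have hHtend : Tendsto
        (fun y : ℝ =>
          (Complex.exp (-2*μ*((x:ℂ) - (y:ℂ))) - Complex.exp (2*μ*((x:ℂ) - (y:ℂ)))) *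
            (∫ τ in Set.Ici y, (Θ₀ τ : ℂ))) atTop (𝓝 0) := by
      apply squeeze_zero_norm'
        (a := fun y => 2*(K/α)*Real.exp (-(2*r)*x) * Real.exp (-(α-2*r)*y))
      · filter_upwards [Filter.eventually_ge_atTop x] with y hy
        have h1 : ‖Complex.exp (-2*μ*((x:ℂ) - (y:ℂ))) - Complex.exp (2*μ*((x:ℂ) - (y:ℂ)))‖
            ≤ 2 * Real.exp (2*r*(y-x)) := (norm_sub_le _ _).trans (hABn y hy)
        have h2 := hFbd y (le_trans hx hy)
        calc ‖_ * _‖ = ‖Complex.exp (-2*μ*((x:ℂ) - (y:ℂ)))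
              - Complex.exp (2*μ*((x:ℂ) - (y:ℂ)))‖ * ‖∫ τ in Set.Ici y, (Θ₀ τ : ℂ)‖ :=
                norm_mul _ _
          _ ≤ (2 * Real.exp (2*r*(y-x))) * (K/α * Real.exp (-α*y)) := by
              apply mul_le_mul h1 h2 (norm_nonneg _)
              positivity
          _ = 2*(K/α)*Real.exp (-(2*r)*x) * Real.exp (-(α-2*r)*y) := by
              linear_combination (2*(K/α)) * hexpalg x y
      · have hmul : Tendsto (fun y : ℝ => (α-2*r)*y) atTop atTop :=
          Filter.Tendsto.const_mul_atTop hβ tendsto_id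
        have h3 := Real.tendsto_exp_neg_atTop_nhds_zero.comp hmul
        have h4 : Tendsto (fun y : ℝ => Real.exp (-(α-2*r)*y)) atTop (𝓝 0) := by
          refine h3.congr fun y => ?_
          simp only [Function.comp_apply, neg_mul]
        simpa using h4.const_mul (2*(K/α)*Real.exp (-(2*r)*x))
    have hH'int : IntegrableOn
        (fun y : ℝ =>
          2*μ*((Complex.exp (-2*μ*((x:ℂ) - (y:ℂ))) + Complex.exp (2*μ*((x:ℂ) - (y:ℂ)))) *
              (∫ τ in Set.Ici y, (Θ₀ τ : ℂ))) -
            (Complex.exp (-2*μ*((x:ℂ) - (y:ℂ))) - Complex.exp (2*μ*((x:ℂ) - (y:ℂ)))) *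
              (Θ₀ y : ℂ)) (Set.Ioi x) :=
      (hi2.const_mul (2*μ)).sub hi1
    have hkey := integral_Ioi_of_hasDerivAt_of_tendsto hHcont hHderiv hH'int hHtend
    have hHx : (Complex.exp (-2*μ*((x:ℂ) - (x:ℂ))) - Complex.exp (2*μ*((x:ℂ) - (x:ℂ)))) *
        (∫ τ in Set.Ici x, (Θ₀ τ : ℂ)) = 0 := by
      simp
    rw [hHx, sub_zero,
      MeasureTheory.integral_sub (hi2.const_mul (2*μ)) hi1,
      MeasureTheory.integral_const_mul] at hkey
    refine ⟨?_, ?_, ?_, ?_⟩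
    · rw [integrableOn_Ici_iff_integrableOn_Ioi]; exact hi1
    · rw [integrableOn_Ici_iff_integrableOn_Ioi]; exact hi2
    · rw [MeasureTheory.integral_Ici_eq_integral_Ioi, MeasureTheory.integral_Ici_eq_integral_Ioi]
      linear_combination -hkey
    · rw [MeasureTheory.integral_Ici_eq_integral_Ioi]
      have h1 : ‖∫ y in Set.Ioi x,
          (Complex.exp (-2*μ*((x:ℂ) - (y:ℂ))) + Complex.exp (2*μ*((x:ℂ) - (y:ℂ)))) *
            (∫ τ in Set.Ici y, (Θ₀ τ : ℂ))‖ ≤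
          ∫ y in Set.Ioi x, 2*(K/α)*Real.exp (-(2*r)*x) * Real.exp (-(α-2*r)*y) := by
        refine norm_integral_le_of_norm_le
          ((exp_neg_integrableOn_Ioi x hβ).const_mul (2*(K/α)*Real.exp (-(2*r)*x))) ?_
        refine (ae_restrict_iff' measurableSet_Ioi).2 (Filter.Eventually.of_forall fun y hy => ?_)
        have hy' : x ≤ y := le_of_lt hy
        have hA1 : ‖Complex.exp (-2*μ*((x:ℂ) - (y:ℂ))) + Complex.exp (2*μ*((x:ℂ) - (y:ℂ)))‖
            ≤ 2 * Real.exp (2*r*(y-x)) := (norm_add_le _ _).trans (hABn y hy')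
        have h2 := hFbd y (hsubI hy)
        calc ‖_ * _‖ = ‖Complex.exp (-2*μ*((x:ℂ) - (y:ℂ)))
              + Complex.exp (2*μ*((x:ℂ) - (y:ℂ)))‖ * ‖∫ τ in Set.Ici y, (Θ₀ τ : ℂ)‖ :=
                norm_mul _ _
          _ ≤ (2 * Real.exp (2*r*(y-x))) * (K/α * Real.exp (-α*y)) := by
              apply mul_le_mul hA1 h2 (norm_nonneg _)
              positivity
          _ = 2*(K/α)*Real.exp (-(2*r)*x) * Real.exp (-(α-2*r)*y) := by
              linear_combination (2*(K/α)) * hexpalg x y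
      have h2 : ∫ y in Set.Ioi x, 2*(K/α)*Real.exp (-(2*r)*x) * Real.exp (-(α-2*r)*y)
          = 2*K/(α*(α-2*r)) * Real.exp (-α * x) := by
        rw [MeasureTheory.integral_const_mul, myint_exp (α-2*r) hβ x]
        have h3 : Real.exp (-(2*r)*x) * Real.exp (-(α-2*r)*x) = Real.exp (-α*x) := by
          rw [← Real.exp_add]; congr 1; ring
        have hα' : α ≠ 0 := ne_of_gt hα
        have hβ' : α - 2*r ≠ 0 := ne_of_gt hβ
        rw [← h3]
        field_simp
      rw [h2] at h1
      exact h1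
  refine ⟨2*K/(α*(α-2*r)), by positivity, fun x hx => ?_, fun x hx => ?_⟩
  · obtain ⟨m1, m2, m3, _⟩ := master x hx
    exact ⟨fun y hy => hΘI y hy, m1, m2, m3⟩
  · exact (master x (le_trans (le_max_left _ _) hx)).2.2.2
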